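/- Let μ* be an upper density on ℕ with conjugate μ_*(X) := 1 − μ*(ℕ ∖ X), and for every positive integer k and S ⊆ ℕ let w_k(S) be the number of residues h ∈ {0, …, k−1} such that μ*(S ∩ (k·ℕ + h)) ≠ 0. Let X ⊆ ℕ and let (k_n)_{n ≥ 1} be a sequence of pairwise coprime positive integers. Then w_k(X) ≤ r_k(X) for every positive integer k, and for every n ≥ 1 one has ∏_{i=1}^{n} (1 − w_{k_i}(ℕ ∖ X)/k_i) ≤ μ_*(X) ≤ μ*(X) ≤ ∏_{i=1}^{n} w_{k_i}(X)/k_i. -/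

import Mathlib

open Set Filter Topology

/-- An upper quasi-density on ℕ. -/
def IsUpperQuasiDensity (μ : Set ℕ → ℝ) : Prop :=
  μ Set.univ = 1 ∧
  (∀ X : Set ℕ, μ X ≤ 1) ∧
  (∀ X Y : Set ℕ, μ (X ∪ Y) ≤ μ X + μ Y) ∧
  (∀ (X : Set ℕ) (k : ℕ), 0 < k → μ ((fun x => k * x) '' X) = μ X / k) ∧
  (∀ (X : Set ℕ) (h : ℕ), μ ((fun x => x + h) '' X) = μ X)

/-- An upper density on ℕ: a monotone upper quasi-density. -/
def IsUpperDensity (μ : Set ℕ → ℝ) : Prop :=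
  IsUpperQuasiDensity μ ∧ ∀ X Y : Set ℕ, X ⊆ Y → μ X ≤ μ Y

/-- A set of naturals is small if every upper quasi-density vanishes on it. -/
def SmallSet (X : Set ℕ) : Prop :=
  ∀ μ : Set ℕ → ℝ, IsUpperQuasiDensity μ → μ X = 0

/-- The upper asymptotic density of a set of naturals. -/
noncomputable def upperAsymptoticDensity (X : Set ℕ) : ℝ :=
  limsup (fun n : ℕ => ((X ∩ Set.Icc 1 n).ncard : ℝ) / n) atTop

/-- The arithmetic progression k·ℕ + h. -/
def AP (k h : ℕ) : Set ℕ := {x : ℕ | ∃ m : ℕ, x = k * m + h}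

/-- A finite union of arithmetic progressions of ℕ. -/
def IsFinUnionAP (A : Set ℕ) : Prop :=
  ∃ s : Finset (ℕ × ℕ), (∀ p ∈ s, 0 < p.1) ∧ A = ⋃ p ∈ s, AP p.1 p.2

/-- The upper Buck density of a set of naturals. -/
noncomputable def buckDensity (X : Set ℕ) : ℝ :=
  sInf {d : ℝ | ∃ A : Set ℕ, IsFinUnionAP A ∧ X ⊆ A ∧ d = upperAsymptoticDensity A}

/-- `rk k X` is the number of residues h ∈ [0, k-1] with X ∩ (k·ℕ + h) ≠ ∅. -/
noncomputable def rk (k : ℕ) (X : Set ℕ) : ℕ :=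
  {h : ℕ | h < k ∧ (X ∩ AP k h).Nonempty}.ncard

/-- `wk μ k S` is the number of residues h ∈ [0, k-1] with μ(S ∩ (k·ℕ + h)) ≠ 0. -/
noncomputable def wk (μ : Set ℕ → ℝ) (k : ℕ) (S : Set ℕ) : ℕ :=
  {h : ℕ | h < k ∧ μ (S ∩ AP k h) ≠ 0}.ncard

section Aux

variable {μ : Set ℕ → ℝ}

lemma uqd_empty (h : IsUpperQuasiDensity μ) : μ ∅ = 0 := by
  have h4 := h.2.2.2.1 ∅ 2 (by norm_num)
  simp only [Set.image_empty] at h4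
  linarith

lemma ud_nonneg (h : IsUpperDensity μ) (X : Set ℕ) : 0 ≤ μ X := by
  have := h.2 ∅ X (Set.empty_subset X)
  rwa [uqd_empty h.1] at this

lemma uqd_AP (h : IsUpperQuasiDensity μ) (q r : ℕ) (hq : 0 < q) :
    μ (AP q r) = 1 / q := by
  have e : AP q r = (fun x => x + r) '' ((fun x => q * x) '' Set.univ) := by
    ext x
    simp only [AP, Set.mem_setOf_eq, Set.image_univ, Set.mem_image, Set.mem_range]
    constructor
    · rintro ⟨m, rfl⟩; exact ⟨q * m, ⟨m, rfl⟩, rfl⟩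
    · rintro ⟨y, ⟨m, rfl⟩, rfl⟩; exact ⟨m, rfl⟩
  rw [e, h.2.2.2.2, h.2.2.2.1 _ q hq, h.1]

lemma uqd_biUnion (h : IsUpperQuasiDensity μ) {ι : Type*} (s : Finset ι) (f : ι → Set ℕ) :
    μ (⋃ i ∈ s, f i) ≤ ∑ i ∈ s, μ (f i) := by
  classical
  induction s using Finset.induction_on with
  | empty => simp [uqd_empty h]
  | @insert _ _ ha ih =>
      rw [Finset.set_biUnion_insert, Finset.sum_insert ha]
      exact le_trans (h.2.2.1 _ _) (by linarith)

open Classical in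
lemma wk_eq_card (μ : Set ℕ → ℝ) (q : ℕ) (X : Set ℕ) :
    wk μ q X = ((Finset.range q).filter (fun h => μ (X ∩ AP q h) ≠ 0)).card := by
  rw [wk, ← Set.ncard_coe_finset]
  congr 1
  ext h
  simp [Finset.mem_filter, Finset.mem_range]

open Classical in
lemma rk_eq_card (q : ℕ) (X : Set ℕ) :
    rk q X = ((Finset.range q).filter (fun h => (X ∩ AP q h).Nonempty)).card := by
  rw [rk, ← Set.ncard_coe_finset]
  congr 1
  ext h
  simp [Finset.mem_filter, Finset.mem_range]

lemma wk_le (μ : Set ℕ → ℝ) (q : ℕ) (X : Set ℕ) : wk μ q X ≤ q := by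
  classical
  rw [wk_eq_card]
  simpa using Finset.card_filter_le (Finset.range q) _

lemma wk_le_rk (h : IsUpperQuasiDensity μ) (q : ℕ) (X : Set ℕ) : wk μ q X ≤ rk q X := by
  classical
  rw [wk_eq_card, rk_eq_card]
  apply Finset.card_le_card
  intro a ha
  simp only [Finset.mem_filter, Finset.mem_range] at ha ⊢
  refine ⟨ha.1, ?_⟩
  by_contra hne
  rw [Set.not_nonempty_iff_eq_empty] at hne
  exact ha.2 (by rw [hne, uqd_empty h])

lemma key_single (h : IsUpperDensity μ) (X : Set ℕ) (q : ℕ) (hq : 0 < q) :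
    μ X ≤ (wk μ q X : ℝ) / q := by
  classical
  have hcover : X = ⋃ r ∈ Finset.range q, X ∩ AP q r := by
    ext x
    simp only [Set.mem_iUnion, Finset.mem_range, Set.mem_inter_iff]
    constructor
    · intro hx
      exact ⟨x % q, Nat.mod_lt x hq, hx, ⟨x / q, (Nat.div_add_mod x q).symm⟩⟩
    · rintro ⟨r, _, hx, _⟩; exact hx
  have h1 : μ X ≤ ∑ r ∈ Finset.range q, μ (X ∩ AP q r) := by
    calc μ X = μ (⋃ r ∈ Finset.range q, X ∩ AP q r) := by rw [← hcover]
      _ ≤ _ := uqd_biUnion h.1 _ _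
  have h2 : ∑ r ∈ Finset.range q, μ (X ∩ AP q r)
      ≤ ∑ r ∈ Finset.range q, (if μ (X ∩ AP q r) ≠ 0 then (1:ℝ)/q else 0) := by
    apply Finset.sum_le_sum
    intro r _
    by_cases hr : μ (X ∩ AP q r) ≠ 0
    · rw [if_pos hr, ← uqd_AP h.1 q r hq]
      exact h.2 _ _ Set.inter_subset_right
    · rw [if_neg hr]
      push_neg at hr
      rw [hr]
  have h3 : ∑ r ∈ Finset.range q, (if μ (X ∩ AP q r) ≠ 0 then (1:ℝ)/q else 0)
      = (wk μ q X : ℝ) / q := by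
    rw [← Finset.sum_filter, Finset.sum_const, wk_eq_card, nsmul_eq_mul]
    ring
  linarith

lemma AP_mul_subset (a b r : ℕ) : AP (a * b) r ⊆ AP a (r % a) := by
  rintro x ⟨m, rfl⟩
  refine ⟨b * m + r / a, ?_⟩
  have hd := Nat.div_add_mod r a
  calc a * b * m + r = a * (b * m) + (a * (r / a) + r % a) := by rw [hd]; ring
    _ = a * (b * m + r / a) + r % a := by ring

lemma wk_mul (h : IsUpperDensity μ) (X : Set ℕ) {a b : ℕ} (ha : 0 < a) (hb : 0 < b)
    (hab : Nat.Coprime a b) : wk μ (a * b) X ≤ wk μ a X * wk μ b X := by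
  classical
  rw [wk_eq_card, wk_eq_card, wk_eq_card, ← Finset.card_product]
  apply Finset.card_le_card_of_injOn (fun r => (r % a, r % b))
  · intro x hx
    simp only [Finset.mem_coe, Finset.mem_filter, Finset.mem_range, Finset.mem_product] at hx ⊢
    obtain ⟨hx1, hx2⟩ := hx
    have key : ∀ c d : ℕ, c * d = a * b → 0 < c →
        μ (X ∩ AP c (x % c)) ≠ 0 := by
      intro c d hcd hc
      have hsub : X ∩ AP (a * b) x ⊆ X ∩ AP c (x % c) := by
        rw [← hcd]
        exact Set.inter_subset_inter_right _ (AP_mul_subset c d x)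
      have := h.2 _ _ hsub
      have h0 := ud_nonneg h (X ∩ AP (a * b) x)
      intro h00
      rw [h00] at this
      exact hx2 (le_antisymm this h0)
    exact ⟨⟨Nat.mod_lt x ha, key a b rfl ha⟩, ⟨Nat.mod_lt x hb, key b a (mul_comm b a) hb⟩⟩
  · intro x hx y hy hxy
    simp only [Finset.coe_filter, Set.mem_setOf_eq, Finset.mem_range] at hx hy
    have h1 : x % a = y % a := congrArg Prod.fst hxy
    have h2 : x % b = y % b := congrArg Prod.snd hxy
    have h3 : x ≡ y [MOD a * b] :=
      (Nat.modEq_and_modEq_iff_modEq_mul hab).mp ⟨h1, h2⟩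
    have h4 : x % (a * b) = y % (a * b) := h3
    rwa [Nat.mod_eq_of_lt hx.1, Nat.mod_eq_of_lt hy.1] at h4

lemma wk_prod (h : IsUpperDensity μ) (X : Set ℕ) (k : ℕ → ℕ) (hpos : ∀ n, 0 < k n)
    (hcop : ∀ m n, m ≠ n → Nat.Coprime (k m) (k n)) (n : ℕ) :
    wk μ (∏ i ∈ Finset.range n, k i) X ≤ ∏ i ∈ Finset.range n, wk μ (k i) X := by
  induction n with
  | zero =>
      simpa using wk_le μ 1 X
  | succ n ih =>
      rw [Finset.prod_range_succ, Finset.prod_range_succ]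
      have hc : Nat.Coprime (∏ i ∈ Finset.range n, k i) (k n) :=
        Nat.Coprime.prod_left (fun i hi => hcop i n (by simp at hi; omega))
      have hP : 0 < ∏ i ∈ Finset.range n, k i :=
        Finset.prod_pos (fun i _ => hpos i)
      exact le_trans (wk_mul h X hP (hpos n) hc) (Nat.mul_le_mul_right _ ih)

lemma key_prod (h : IsUpperDensity μ) (X : Set ℕ) (k : ℕ → ℕ) (hpos : ∀ n, 0 < k n)
    (hcop : ∀ m n, m ≠ n → Nat.Coprime (k m) (k n)) (n : ℕ) :
    μ X ≤ ∏ i ∈ Finset.range n, (wk μ (k i) X : ℝ) / (k i : ℝ) := by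
  set K := ∏ i ∈ Finset.range n, k i with hK
  have hKpos : 0 < K := Finset.prod_pos (fun i _ => hpos i)
  have h1 : μ X ≤ (wk μ K X : ℝ) / K := key_single h X K hKpos
  have h2 : (wk μ K X : ℝ) ≤ ∏ i ∈ Finset.range n, (wk μ (k i) X : ℝ) := by
    have := wk_prod h X k hpos hcop n
    exact_mod_cast this
  have h3 : (K : ℝ) = ∏ i ∈ Finset.range n, (k i : ℝ) := by push_cast [hK]; rfl
  calc μ X ≤ (wk μ K X : ℝ) / K := h1
    _ ≤ (∏ i ∈ Finset.range n, (wk μ (k i) X : ℝ)) / (∏ i ∈ Finset.range n, (k i : ℝ)) := by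
        rw [← h3]
        gcongr
    _ = ∏ i ∈ Finset.range n, (wk μ (k i) X : ℝ) / (k i : ℝ) :=
        (Finset.prod_div_distrib _ _).symm

end Aux

/-- For an upper density μ* on ℕ with conjugate μ_*, a set X and a sequence of
pairwise coprime positive integers (k_n): w_k(X) ≤ r_k(X) for every positive k,
and ∏_{i=1}^n (1 - w_{k_i}(ℕ∖X)/k_i) ≤ μ_*(X) ≤ μ*(X) ≤ ∏_{i=1}^n w_{k_i}(X)/k_i. -/
theorem modular_criterion_bounds (μ : Set ℕ → ℝ) (hμ : IsUpperDensity μ)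
    (X : Set ℕ) (k : ℕ → ℕ) (hpos : ∀ n, 0 < k n)
    (hcop : ∀ m n, m ≠ n → Nat.Coprime (k m) (k n)) :
    (∀ q : ℕ, 0 < q → wk μ q X ≤ rk q X) ∧
    ∀ n : ℕ, 0 < n →
      (∏ i ∈ Finset.range n, (1 - (wk μ (k i) Xᶜ : ℝ) / (k i : ℝ)) ≤ 1 - μ Xᶜ) ∧
      (1 - μ Xᶜ ≤ μ X) ∧
      (μ X ≤ ∏ i ∈ Finset.range n, (wk μ (k i) X : ℝ) / (k i : ℝ)) := by
  constructor
  · intro q _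
    exact wk_le_rk hμ.1 q X
  · intro n hn
    have hub : μ X ≤ ∏ i ∈ Finset.range n, (wk μ (k i) X : ℝ) / (k i : ℝ) :=
      key_prod hμ X k hpos hcop n
    have hmid : 1 - μ Xᶜ ≤ μ X := by
      have hu : μ (X ∪ Xᶜ) = 1 := by rw [Set.union_compl_self]; exact hμ.1.1
      have := hμ.1.2.2.1 X Xᶜ
      linarith
    refine ⟨?_, hmid, hub⟩
    have hubC : μ Xᶜ ≤ ∏ i ∈ Finset.range n, (wk μ (k i) Xᶜ : ℝ) / (k i : ℝ) :=
      key_prod hμ Xᶜ k hpos hcop n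
    set a : ℕ → ℝ := fun i => (wk μ (k i) Xᶜ : ℝ) / (k i : ℝ) with ha
    have ha0 : ∀ i, 0 ≤ a i := fun i => div_nonneg (Nat.cast_nonneg _) (Nat.cast_nonneg _)
    have ha1 : ∀ i, a i ≤ 1 := by
      intro i
      rw [ha]
      have hki : (0:ℝ) < (k i : ℝ) := by exact_mod_cast hpos i
      rw [div_le_one hki]
      exact_mod_cast wk_le μ (k i) Xᶜ
    obtain ⟨m, rfl⟩ : ∃ m, n = m + 1 := ⟨n - 1, (Nat.succ_pred_eq_of_pos hn).symm⟩
    have hP1 : ∏ i ∈ Finset.range m, (1 - a i) ≤ 1 :=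
      Finset.prod_le_one (fun i _ => by linarith [ha1 i]) (fun i _ => by linarith [ha0 i])
    have hP0 : 0 ≤ ∏ i ∈ Finset.range m, (1 - a i) :=
      Finset.prod_nonneg (fun i _ => by linarith [ha1 i])
    have hQ1 : ∏ i ∈ Finset.range m, a i ≤ 1 :=
      Finset.prod_le_one (fun i _ => ha0 i) (fun i _ => ha1 i)
    have hQ0 : 0 ≤ ∏ i ∈ Finset.range m, a i :=
      Finset.prod_nonneg (fun i _ => ha0 i)
    rw [Finset.prod_range_succ]
    rw [Finset.prod_range_succ] at hubC
    nlinarith [mul_nonneg (sub_nonneg.mpr hP1) (sub_nonneg.mpr (ha1 m)),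
      mul_nonneg (sub_nonneg.mpr hQ1) (ha0 m)]
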